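/- Let $s \ge 2$ and let $\mathcal{L} = \{A_1, \ldots, A_m\}$ be an $s$-cover on $[n]$ with $|A_i| = a_i$. Then $\sum_{i=1}^m \binom{a_i}{2} \ge \frac{n^2}{2(s-1)} - \frac{n}{2}$. -/

import Mathlib

open Finset SimpleGraph

-- degree sum of turanGraph
lemma turan_deg_sum (n r : ℕ) (hr : 0 < r) :
    ((∑ v, (turanGraph n r).degree v : ℕ) : ℝ) ≤ (1 - 1/(r:ℝ)) * n^2 := by
  classical
  set c : ℕ → ℕ := fun i => #(univ.filter (fun w : Fin n => (w : ℕ) % r = i)) with hc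
  have hmaps : ∀ v : Fin n, v ∈ (univ : Finset (Fin n)) → (v : ℕ) % r ∈ Finset.range r :=
    fun v _ => Finset.mem_range.2 (Nat.mod_lt _ hr)
  have hsumc : ∑ i ∈ Finset.range r, c i = n := by
    rw [← Finset.card_fin n, Finset.card_eq_sum_card_fiberwise hmaps]
  have hdeg : ∀ v : Fin n, (turanGraph n r).degree v + c ((v : ℕ) % r) = n := by
    intro v
    rw [← SimpleGraph.card_neighborFinset_eq_degree, neighborFinset_eq_filter]
    have : (univ.filter (fun w : Fin n => (turanGraph n r).Adj v w)) =
        univ.filter (fun w : Fin n => ¬ ((w : ℕ) % r = (v : ℕ) % r)) := by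
      apply Finset.filter_congr; intro w _
      simp [turanGraph, ne_comm, eq_comm]
    rw [this, hc]
    rw [Finset.filter_not, Finset.card_sdiff_of_subset (Finset.filter_subset _ _)]
    have hle : #(univ.filter (fun w : Fin n => (w : ℕ) % r = (v : ℕ) % r)) ≤ n := by
      simpa using Finset.card_filter_le (univ : Finset (Fin n)) _
    simp only [Finset.card_univ, Fintype.card_fin]
    omega
  have hfib : ∑ v : Fin n, c ((v : ℕ) % r) = ∑ i ∈ Finset.range r, c i ^ 2 := by
    rw [← Finset.sum_fiberwise_of_maps_to hmaps (fun v : Fin n => c ((v : ℕ) % r))]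
    refine Finset.sum_congr rfl fun i _ => ?_
    have : ∀ v ∈ univ.filter (fun w : Fin n => (w : ℕ) % r = i),
        c ((v : ℕ) % r) = c i := by
      intro v hv; rw [(Finset.mem_filter.1 hv).2]
    rw [Finset.sum_congr rfl this, Finset.sum_const, hc]
    simp [sq]
  have hsum : ∑ v, (turanGraph n r).degree v + ∑ i ∈ Finset.range r, c i ^ 2 = n * n := by
    rw [← hfib, ← Finset.sum_add_distrib]
    simp [hdeg, Finset.sum_const, Finset.card_univ]
  have cauchy : (n : ℝ)^2 ≤ (r : ℝ) * ∑ i ∈ Finset.range r, (c i : ℝ)^2 := by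
    have := sq_sum_le_card_mul_sum_sq (s := Finset.range r) (f := fun i => (c i : ℝ))
    rw [← Nat.cast_sum] at this
    simpa [hsumc] using this
  have hsumR : ((∑ v, (turanGraph n r).degree v : ℕ) : ℝ)
      = (n:ℝ)^2 - ∑ i ∈ Finset.range r, (c i : ℝ)^2 := by
    have := congrArg (fun m : ℕ => (m : ℝ)) hsum
    push_cast at this
    push_cast
    rw [sq]; linarith
  rw [hsumR]
  have hr' : (0:ℝ) < r := by exact_mod_cast hr
  rw [sub_mul, one_mul]
  have : (n:ℝ)^2 / r ≤ ∑ i ∈ Finset.range r, (c i : ℝ)^2 := by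
    rw [div_le_iff₀ hr']; linarith [cauchy]
  have h2 : 1/(r:ℝ) * n^2 = (n:ℝ)^2 / r := by ring
  linarith

lemma turan_bound {n s : ℕ} (hs : 2 ≤ s) (G : SimpleGraph (Fin n)) [DecidableRel G.Adj]
    (hG : G.CliqueFree s) : ((∑ v, G.degree v : ℕ) : ℝ) ≤ (1 - 1/((s:ℝ)-1)) * n^2 := by
  classical
  set r := s - 1 with hrdef
  have hr : 0 < r := by omega
  have hs' : s = r + 1 := by omega
  obtain ⟨T, instT, hT⟩ := SimpleGraph.exists_isTuranMaximal (V := Fin n) hr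
  letI := instT
  have h1 : #G.edgeFinset ≤ #T.edgeFinset := hT.2 (G' := G) (hs' ▸ hG)
  obtain ⟨f⟩ := hT.nonempty_iso_turanGraph
  have h2 : #T.edgeFinset = #(turanGraph (Fintype.card (Fin n)) r).edgeFinset := by
    rw [edgeFinset_card, edgeFinset_card]
    exact Fintype.card_congr f.mapEdgeSet
  rw [Fintype.card_fin] at h2
  have h3 : ∑ v, G.degree v ≤ ∑ v, (turanGraph n r).degree v := by
    rw [SimpleGraph.sum_degrees_eq_twice_card_edges, SimpleGraph.sum_degrees_eq_twice_card_edges]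
    omega
  have h4 := turan_deg_sum n r hr
  have hcast : ((s:ℝ) - 1) = (r : ℝ) := by
    rw [hrdef]; push_cast [Nat.cast_sub (by omega : 1 ≤ s)]; ring
  rw [hcast]
  calc ((∑ v, G.degree v : ℕ) : ℝ) ≤ ((∑ v, (turanGraph n r).degree v : ℕ) : ℝ) := by
        exact_mod_cast h3
    _ ≤ _ := h4

lemma cast_mul_pred (a : ℕ) : ((a * (a - 1) : ℕ) : ℝ) = (a:ℝ) * ((a:ℝ) - 1) := by
  rcases a with _ | b
  · simp
  · push_cast; ring

theorem sum_choose_two_lower_bound (s n : ℕ) (hs : 2 ≤ s)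
    (L : Finset (Finset (Fin n)))
    (hlin : ∀ A ∈ L, ∀ B ∈ L, A ≠ B → (A ∩ B).card ≤ 1)
    (hcov : ∀ S : Finset (Fin n), S.card = s →
      ∃ x ∈ S, ∃ y ∈ S, x ≠ y ∧ ∃ A ∈ L, x ∈ A ∧ y ∈ A) :
    (∑ A ∈ L, (A.card.choose 2 : ℝ)) ≥ (n : ℝ)^2 / (2 * (s - 1)) - n / 2 := by
  classical
  set G : SimpleGraph (Fin n) :=
    { Adj := fun x y => x ≠ y ∧ ¬ ∃ A ∈ L, x ∈ A ∧ y ∈ A,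
      symm := ⟨by
        rintro x y ⟨h1, h2⟩
        exact ⟨h1.symm, fun ⟨A, hA, hyA, hxA⟩ => h2 ⟨A, hA, hxA, hyA⟩⟩⟩,
      loopless := ⟨fun x h => h.1 rfl⟩ } with hGdef
  haveI : DecidableRel G.Adj := fun x y =>
    inferInstanceAs (Decidable (x ≠ y ∧ ¬ ∃ A ∈ L, x ∈ A ∧ y ∈ A))
  have hcf : G.CliqueFree s := by
    intro t ht
    obtain ⟨x, hx, y, hy, hxy, hA⟩ := hcov t ht.2
    exact (ht.1 hx hy hxy).2 hA
  have key : ∀ x : Fin n, n - 1 ≤ G.degree x + ∑ A ∈ L.filter (x ∈ ·), (#A - 1) := by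
    intro x
    have hsub : univ.erase x ⊆
        G.neighborFinset x ∪ (L.filter (x ∈ ·)).biUnion (fun A => A.erase x) := by
      intro y hy
      rw [Finset.mem_erase] at hy
      by_cases hcovd : ∃ A ∈ L, x ∈ A ∧ y ∈ A
      · obtain ⟨A, hA, hxA, hyA⟩ := hcovd
        exact Finset.mem_union_right _ (Finset.mem_biUnion.2
          ⟨A, Finset.mem_filter.2 ⟨hA, hxA⟩, Finset.mem_erase.2 ⟨hy.1, hyA⟩⟩)
      · exact Finset.mem_union_left _
          ((SimpleGraph.mem_neighborFinset _ _ _).2 ⟨hy.1.symm, hcovd⟩)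
    have h1 := Finset.card_le_card hsub
    have h2 := Finset.card_union_le (G.neighborFinset x)
      ((L.filter (x ∈ ·)).biUnion (fun A => A.erase x))
    have h3 := Finset.card_biUnion_le (s := L.filter (x ∈ ·)) (t := fun A => A.erase x)
    have h4 : ∀ A ∈ L.filter (x ∈ ·), #(A.erase x) = #A - 1 := fun A hA =>
      Finset.card_erase_of_mem (Finset.mem_filter.1 hA).2
    rw [Finset.sum_congr rfl h4] at h3
    have h5 : #(univ.erase x) = n - 1 := by
      rw [Finset.card_erase_of_mem (Finset.mem_univ x)]; simp
    rw [h5] at h1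
    rw [SimpleGraph.card_neighborFinset_eq_degree] at h2
    omega
  have swap : (∑ x : Fin n, ∑ A ∈ L.filter (x ∈ ·), (#A - 1)) = ∑ A ∈ L, #A * (#A - 1) := by
    simp only [Finset.sum_filter]
    rw [Finset.sum_comm]
    refine Finset.sum_congr rfl fun A hA => ?_
    rw [← Finset.sum_filter, Finset.filter_univ_mem, Finset.sum_const, smul_eq_mul]
  have total : n * (n - 1) ≤ (∑ v, G.degree v) + ∑ A ∈ L, #A * (#A - 1) := by
    calc n * (n - 1) = ∑ _x : Fin n, (n - 1) := by simp [mul_comm]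
      _ ≤ ∑ x, (G.degree x + ∑ A ∈ L.filter (x ∈ ·), (#A - 1)) :=
          Finset.sum_le_sum fun x _ => key x
      _ = _ := by rw [Finset.sum_add_distrib, swap]
  have hT := turan_bound hs G hcf
  -- move to ℝ
  have totR : (n:ℝ) * ((n:ℝ) - 1) ≤ ((∑ v, G.degree v : ℕ) : ℝ)
      + ∑ A ∈ L, (#A : ℝ) * ((#A:ℝ) - 1) := by
    calc (n:ℝ) * ((n:ℝ) - 1) = ((n * (n-1) : ℕ) : ℝ) := (cast_mul_pred n).symm
      _ ≤ (((∑ v, G.degree v) + ∑ A ∈ L, #A * (#A - 1) : ℕ) : ℝ) := Nat.cast_le.2 total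
      _ = _ := by
        push_cast
        refine congrArg _ (Finset.sum_congr rfl fun A _ => ?_)
        rcases Nat.eq_zero_or_pos (#A) with h | h
        · simp [h]
        · rw [Nat.cast_sub h]; simp
  have hchoose : ∀ A ∈ L, (A.card.choose 2 : ℝ) = (#A:ℝ) * ((#A:ℝ) - 1) / 2 := fun A _ => by
    rw [Nat.cast_choose_two]
  have hsumch : ∑ A ∈ L, (A.card.choose 2 : ℝ) = (∑ A ∈ L, (#A:ℝ) * ((#A:ℝ) - 1)) / 2 := by
    rw [Finset.sum_congr rfl hchoose, Finset.sum_div]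
  have ht1 : (1:ℝ) ≤ (s:ℝ) - 1 := by
    have : (2:ℝ) ≤ s := by exact_mod_cast hs
    linarith
  have ht0 : (0:ℝ) < (s:ℝ) - 1 := by linarith
  have hdiv : (1/((s:ℝ)-1)) * (n:ℝ)^2 = (n:ℝ)^2 / ((s:ℝ)-1) := by ring
  have hdiv2 : (n:ℝ)^2 / (2 * ((s:ℝ)-1)) = ((n:ℝ)^2 / ((s:ℝ)-1)) / 2 := by
    rw [div_div]; ring_nf
  rw [ge_iff_le, hsumch, hdiv2]
  rw [sub_mul, one_mul, hdiv] at hT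
  linarith
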